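/- Under the standing assumptions, for any two red squares Q and Q' of S there exists a finite sequence of red squares Q = Q₁, Q₂, …, Q_N = Q' of S such that for each i = 1, …, N−1 the squares Qᵢ and Qᵢ₊₁ are distinct and share a common corner which is an interior vertex; the same holds for any two black squares of S. -/

import Mathlib

/-- The closed unit square `[i,i+1] × [j,j+1] ⊆ ℝ²` indexed by `q = (i,j) ∈ ℤ × ℤ`. -/
def unitSq (q : ℤ × ℤ) : Set (ℝ × ℝ) :=
  Set.Icc (q.1 : ℝ) (q.1 + 1) ×ˢ Set.Icc (q.2 : ℝ) (q.2 + 1)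

/-- `Ω̄`, the union of the closed squares of the mesh `S`. -/
def meshRegion (S : Finset (ℤ × ℤ)) : Set (ℝ × ℝ) := ⋃ q ∈ S, unitSq q

/-- `v` is an interior vertex of `S`: all four grid squares having `v` as a corner belong
to `S`. -/
abbrev interiorVertex (S : Finset (ℤ × ℤ)) (v : ℤ × ℤ) : Prop :=
  (v.1 - 1, v.2 - 1) ∈ S ∧ (v.1 - 1, v.2) ∈ S ∧ (v.1, v.2 - 1) ∈ S ∧ v ∈ S

/-- `v` is a mesh vertex of `S`: it is a corner of some square of `S`. -/
abbrev meshVertex (S : Finset (ℤ × ℤ)) (v : ℤ × ℤ) : Prop :=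
  (v.1 - 1, v.2 - 1) ∈ S ∨ (v.1 - 1, v.2) ∈ S ∨ (v.1, v.2 - 1) ∈ S ∨ v ∈ S

/-- `v` is a boundary vertex of `S`: a mesh vertex which is not interior. -/
abbrev boundaryVertex (S : Finset (ℤ × ℤ)) (v : ℤ × ℤ) : Prop :=
  meshVertex S v ∧ ¬ interiorVertex S v

/-- The four corners of the square indexed by `q`. -/
def cornersF (q : ℤ × ℤ) : Finset (ℤ × ℤ) :=
  {q, (q.1 + 1, q.2), (q.1, q.2 + 1), (q.1 + 1, q.2 + 1)}

/-- `q` is an interior square: all four of its corners are interior vertices. -/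
abbrev interiorSquare (S : Finset (ℤ × ℤ)) (q : ℤ × ℤ) : Prop :=
  interiorVertex S q ∧ interiorVertex S (q.1 + 1, q.2) ∧
    interiorVertex S (q.1, q.2 + 1) ∧ interiorVertex S (q.1 + 1, q.2 + 1)

/-- The square `(i,j)` is red if `i + j` is even (and black otherwise). -/
abbrev isRed (q : ℤ × ℤ) : Prop := (q.1 + q.2) % 2 = 0

/-- The standing assumptions on the mesh `S`: it is nonempty, `Ω` is connected and simply
connected, no square has four boundary corners, every grid edge shared by two squares of `S`
has an interior endpoint, and no square has exactly two boundary corners lying at diagonally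
opposite corners. -/
structure Standing (S : Finset (ℤ × ℤ)) : Prop where
  nonempty : S.Nonempty
  connected : IsConnected (interior (meshRegion S))
  simplyConnected : SimplyConnectedSpace ↥(interior (meshRegion S))
  noFourBoundary : ∀ q ∈ S,
    ¬ (boundaryVertex S q ∧ boundaryVertex S (q.1 + 1, q.2) ∧
        boundaryVertex S (q.1, q.2 + 1) ∧ boundaryVertex S (q.1 + 1, q.2 + 1))
  edgeH : ∀ v : ℤ × ℤ, v ∈ S → (v.1, v.2 - 1) ∈ S →
    interiorVertex S v ∨ interiorVertex S (v.1 + 1, v.2)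
  edgeV : ∀ v : ℤ × ℤ, v ∈ S → (v.1 - 1, v.2) ∈ S →
    interiorVertex S v ∨ interiorVertex S (v.1, v.2 + 1)
  noDiagOne : ∀ q ∈ S,
    ¬ (boundaryVertex S q ∧ boundaryVertex S (q.1 + 1, q.2 + 1) ∧
        interiorVertex S (q.1 + 1, q.2) ∧ interiorVertex S (q.1, q.2 + 1))
  noDiagTwo : ∀ q ∈ S,
    ¬ (boundaryVertex S (q.1 + 1, q.2) ∧ boundaryVertex S (q.1, q.2 + 1) ∧
        interiorVertex S q ∧ interiorVertex S (q.1 + 1, q.2 + 1))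

/-- The discrete `x`-derivative `∂ˣc(Q)` of a scalar vertex function on the square `Q`. -/
def dX (c : ℤ × ℤ → ℝ) (q : ℤ × ℤ) : ℝ :=
  c (q.1 + 1, q.2) + c (q.1 + 1, q.2 + 1) - c (q.1, q.2) - c (q.1, q.2 + 1)

/-- The discrete `y`-derivative `∂ʸc(Q)` of a scalar vertex function on the square `Q`. -/
def dY (c : ℤ × ℤ → ℝ) (q : ℤ × ℤ) : ℝ :=
  c (q.1, q.2 + 1) + c (q.1 + 1, q.2 + 1) - c (q.1, q.2) - c (q.1 + 1, q.2)

/-- The discrete divergence `(Dc)(Q) = ∂ˣc¹(Q) + ∂ʸc²(Q)`. -/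
def Ddiv (c : ℤ × ℤ → ℝ × ℝ) (q : ℤ × ℤ) : ℝ :=
  dX (fun v => (c v).1) q + dY (fun v => (c v).2) q

/-- The discrete curl `(Cc)(Q) = ∂ˣc²(Q) − ∂ʸc¹(Q)`. -/
def Ccurl (c : ℤ × ℤ → ℝ × ℝ) (q : ℤ × ℤ) : ℝ :=
  dX (fun v => (c v).2) q - dY (fun v => (c v).1) q
namespace SCC

/-- Step relation: distinct same-colored squares sharing an interior corner. -/
def Step (S : Finset (ℤ × ℤ)) (a b : ℤ × ℤ) : Prop :=
  a ≠ b ∧ (isRed a ↔ isRed b) ∧ ∃ v, v ∈ cornersF a ∧ v ∈ cornersF b ∧ interiorVertex S v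

abbrev Reach (S : Finset (ℤ × ℤ)) := Relation.ReflTransGen (Step S)

lemma corner_mem {v q : ℤ × ℤ} :
    v ∈ cornersF q ↔ (v.1 = q.1 ∨ v.1 = q.1 + 1) ∧ (v.2 = q.2 ∨ v.2 = q.2 + 1) := by
  simp only [cornersF, Finset.mem_insert, Finset.mem_singleton, Prod.ext_iff]
  constructor
  · rintro (h | h | h | h) <;> simp_all <;> tauto
  · rintro ⟨h1 | h1, h2 | h2⟩ <;> tauto

lemma corner_mem'' {v q : ℤ × ℤ} (h1 : v.1 = q.1 ∨ v.1 = q.1 + 1)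
    (h2 : v.2 = q.2 ∨ v.2 = q.2 + 1) : v ∈ cornersF q := corner_mem.mpr ⟨h1, h2⟩

lemma corner_self (q : ℤ × ℤ) : q ∈ cornersF q := corner_mem'' (Or.inl rfl) (Or.inl rfl)

lemma mem_of_corner (S : Finset (ℤ × ℤ)) {v q : ℤ × ℤ} (h : v ∈ cornersF q)
    (hv : interiorVertex S v) : q ∈ S := by
  obtain ⟨h1 | h1, h2 | h2⟩ := corner_mem.mp h
  · have hq : q = v := Prod.ext_iff.mpr ⟨by omega, by omega⟩
    rw [hq]; exact hv.2.2.2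
  · have hq : q = (v.1, v.2 - 1) := Prod.ext_iff.mpr ⟨by omega, by omega⟩
    rw [hq]; exact hv.2.2.1
  · have hq : q = (v.1 - 1, v.2) := Prod.ext_iff.mpr ⟨by omega, by omega⟩
    rw [hq]; exact hv.2.1
  · have hq : q = (v.1 - 1, v.2 - 1) := Prod.ext_iff.mpr ⟨by omega, by omega⟩
    rw [hq]; exact hv.1

lemma meshVertex_of_corner {S : Finset (ℤ × ℤ)} {v q : ℤ × ℤ} (h : v ∈ cornersF q)
    (hq : q ∈ S) : meshVertex S v := by
  obtain ⟨h1 | h1, h2 | h2⟩ := corner_mem.mp h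
  · exact Or.inr (Or.inr (Or.inr (by have : v = q := Prod.ext_iff.mpr ⟨h1, h2⟩; rw [this]; exact hq)))
  · exact Or.inr (Or.inr (Or.inl (by have : (v.1, v.2 - 1) = q := Prod.ext_iff.mpr ⟨by omega, by omega⟩; rw [this]; exact hq)))
  · exact Or.inr (Or.inl (by have : (v.1 - 1, v.2) = q := Prod.ext_iff.mpr ⟨by omega, by omega⟩; rw [this]; exact hq))
  · exact Or.inl (by have : (v.1 - 1, v.2 - 1) = q := Prod.ext_iff.mpr ⟨by omega, by omega⟩; rw [this]; exact hq)

lemma reach_of_vertex (S : Finset (ℤ × ℤ)) {u X Z : ℤ × ℤ} (hu : interiorVertex S u)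
    (hX : u ∈ cornersF X) (hZ : u ∈ cornersF Z) (hc : isRed X ↔ isRed Z) : Reach S X Z := by
  rcases eq_or_ne X Z with rfl | hne
  · exact .refl
  · exact .single ⟨hne, hc, u, hX, hZ, hu⟩

lemma reach_via (S : Finset (ℤ × ℤ)) {P P'' v w X Y : ℤ × ℤ}
    (hv : interiorVertex S v) (hw : interiorVertex S w)
    (hPv : v ∈ cornersF P) (hPw : w ∈ cornersF P)
    (hP''v : v ∈ cornersF P'') (hP''w : w ∈ cornersF P'')
    (hcol : ¬ (isRed P'' ↔ isRed P))
    (hX : v ∈ cornersF X) (hY : w ∈ cornersF Y) (hXY : isRed X ↔ isRed Y) :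
    Reach S X Y := by
  by_cases hXP : isRed X ↔ isRed P
  · exact (reach_of_vertex S hv hX hPv hXP).trans (reach_of_vertex S hw hPw hY (by tauto))
  · exact (reach_of_vertex S hv hX hP''v (by tauto)).trans
      (reach_of_vertex S hw hP''w hY (by tauto))

lemma reach_attached_adj (S : Finset (ℤ × ℤ)) {P v w X Y : ℤ × ℤ}
    (hv : interiorVertex S v) (hw : interiorVertex S w)
    (hPv : v ∈ cornersF P) (hPw : w ∈ cornersF P)
    (hvw : v.1 = w.1 ∨ v.2 = w.2)
    (hX : v ∈ cornersF X) (hY : w ∈ cornersF Y) (hXY : isRed X ↔ isRed Y) :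
    Reach S X Y := by
  by_cases hvweq : v = w
  · subst hvweq; exact reach_of_vertex S hv hX hY hXY
  obtain ⟨a1, a2⟩ := corner_mem.mp hPv
  obtain ⟨b1, b2⟩ := corner_mem.mp hPw
  rcases hvw with hvw | hvw
  · -- vertical edge x = v.1
    have hne2 : v.2 ≠ w.2 := fun hc => hvweq (Prod.ext_iff.mpr ⟨hvw, hc⟩)
    refine reach_via S (P'' := (2*v.1 - P.1 - 1, P.2)) hv hw hPv hPw
      (corner_mem'' (by simp; omega) (by simp; omega))
      (corner_mem'' (by simp; omega) (by simp; omega)) (by simp [isRed]; omega) hX hY hXY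
  · have hne1 : v.1 ≠ w.1 := fun hc => hvweq (Prod.ext_iff.mpr ⟨hc, hvw⟩)
    refine reach_via S (P'' := (P.1, 2*v.2 - P.2 - 1)) hv hw hPv hPw
      (corner_mem'' (by simp; omega) (by simp; omega))
      (corner_mem'' (by simp; omega) (by simp; omega)) (by simp [isRed]; omega) hX hY hXY

lemma exists_colored_square (u X : ℤ × ℤ) :
    ∃ Z, u ∈ cornersF Z ∧ (isRed Z ↔ isRed X) := by
  by_cases h : isRed u ↔ isRed X
  · exact ⟨u, corner_self u, h⟩
  · refine ⟨(u.1 - 1, u.2), corner_mem'' (by simp) (by simp), ?_⟩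
    simp only [isRed] at h ⊢
    omega

end SCC
namespace SCC

lemma diag1 (S : Finset (ℤ × ℤ)) (hst : Standing S) {P : ℤ × ℤ} (hP : P ∈ S)
    (h1 : interiorVertex S P) (h2 : interiorVertex S (P.1 + 1, P.2 + 1)) :
    interiorVertex S (P.1 + 1, P.2) ∨ interiorVertex S (P.1, P.2 + 1) := by
  by_contra hcon
  push_neg at hcon
  exact hst.noDiagTwo P hP
    ⟨⟨meshVertex_of_corner (corner_mem'' (by simp) (by simp)) hP, hcon.1⟩,
     ⟨meshVertex_of_corner (corner_mem'' (by simp) (by simp)) hP, hcon.2⟩, h1, h2⟩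

lemma diag2 (S : Finset (ℤ × ℤ)) (hst : Standing S) {P : ℤ × ℤ} (hP : P ∈ S)
    (h1 : interiorVertex S (P.1 + 1, P.2)) (h2 : interiorVertex S (P.1, P.2 + 1)) :
    interiorVertex S P ∨ interiorVertex S (P.1 + 1, P.2 + 1) := by
  by_contra hcon
  push_neg at hcon
  exact hst.noDiagOne P hP
    ⟨⟨meshVertex_of_corner (corner_self P) hP, hcon.1⟩,
     ⟨meshVertex_of_corner (corner_mem'' (by simp) (by simp)) hP, hcon.2⟩, h1, h2⟩

lemma reach_attached (S : Finset (ℤ × ℤ)) (hst : Standing S) {P v w X Y : ℤ × ℤ} (hP : P ∈ S)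
    (hv : interiorVertex S v) (hw : interiorVertex S w)
    (hPv : v ∈ cornersF P) (hPw : w ∈ cornersF P)
    (hX : v ∈ cornersF X) (hY : w ∈ cornersF Y) (hXY : isRed X ↔ isRed Y) :
    Reach S X Y := by
  by_cases hvw : v.1 = w.1 ∨ v.2 = w.2
  · exact reach_attached_adj S hv hw hPv hPw hvw hX hY hXY
  push_neg at hvw
  obtain ⟨hne1, hne2⟩ := hvw
  obtain ⟨a1, a2⟩ := corner_mem.mp hPv
  obtain ⟨b1, b2⟩ := corner_mem.mp hPw
  have hcP : ((v.1, w.2) : ℤ × ℤ) ∈ cornersF P := corner_mem'' (by simp; omega) (by simp; omega)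
  have hdP : ((w.1, v.2) : ℤ × ℤ) ∈ cornersF P := corner_mem'' (by simp; omega) (by simp; omega)
  have hcd : interiorVertex S (v.1, w.2) ∨ interiorVertex S (w.1, v.2) := by
    rcases a1 with a1 | a1 <;> rcases a2 with a2 | a2
    · -- v = P, w = P + (1,1)
      have hvP : v = P := Prod.ext_iff.mpr ⟨by omega, by omega⟩
      have hwP : w = (P.1 + 1, P.2 + 1) := Prod.ext_iff.mpr ⟨by omega, by omega⟩
      rcases diag1 S hst hP (hvP ▸ hv) (hwP ▸ hw) with h | h
      · exact Or.inr (by rwa [show ((w.1, v.2) : ℤ × ℤ) = (P.1 + 1, P.2) from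
          Prod.ext_iff.mpr ⟨by omega, by omega⟩])
      · exact Or.inl (by rwa [show ((v.1, w.2) : ℤ × ℤ) = (P.1, P.2 + 1) from
          Prod.ext_iff.mpr ⟨by omega, by omega⟩])
    · -- v = (P.1, P.2+1), w = (P.1+1, P.2)
      have hvP : v = (P.1, P.2 + 1) := Prod.ext_iff.mpr ⟨by omega, by omega⟩
      have hwP : w = (P.1 + 1, P.2) := Prod.ext_iff.mpr ⟨by omega, by omega⟩
      rcases diag2 S hst hP (hwP ▸ hw) (hvP ▸ hv) with h | h
      · exact Or.inl (by rwa [show ((v.1, w.2) : ℤ × ℤ) = (P.1, P.2) from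
          Prod.ext_iff.mpr ⟨by omega, by omega⟩, Prod.mk.eta])
      · exact Or.inr (by rwa [show ((w.1, v.2) : ℤ × ℤ) = (P.1 + 1, P.2 + 1) from
          Prod.ext_iff.mpr ⟨by omega, by omega⟩])
    · -- v = (P.1+1, P.2), w = (P.1, P.2+1)
      have hvP : v = (P.1 + 1, P.2) := Prod.ext_iff.mpr ⟨by omega, by omega⟩
      have hwP : w = (P.1, P.2 + 1) := Prod.ext_iff.mpr ⟨by omega, by omega⟩
      rcases diag2 S hst hP (hvP ▸ hv) (hwP ▸ hw) with h | h
      · exact Or.inr (by rwa [show ((w.1, v.2) : ℤ × ℤ) = (P.1, P.2) from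
          Prod.ext_iff.mpr ⟨by omega, by omega⟩, Prod.mk.eta])
      · exact Or.inl (by rwa [show ((v.1, w.2) : ℤ × ℤ) = (P.1 + 1, P.2 + 1) from
          Prod.ext_iff.mpr ⟨by omega, by omega⟩])
    · -- v = P + (1,1), w = P
      have hvP : v = (P.1 + 1, P.2 + 1) := Prod.ext_iff.mpr ⟨by omega, by omega⟩
      have hwP : w = P := Prod.ext_iff.mpr ⟨by omega, by omega⟩
      rcases diag1 S hst hP (hwP ▸ hw) (hvP ▸ hv) with h | h
      · exact Or.inl (by rwa [show ((v.1, w.2) : ℤ × ℤ) = (P.1 + 1, P.2) from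
          Prod.ext_iff.mpr ⟨by omega, by omega⟩])
      · exact Or.inr (by rwa [show ((w.1, v.2) : ℤ × ℤ) = (P.1, P.2 + 1) from
          Prod.ext_iff.mpr ⟨by omega, by omega⟩])
  rcases hcd with hx | hx
  · obtain ⟨Z, hZx, hZcol⟩ := exists_colored_square (v.1, w.2) X
    exact (reach_attached_adj S hv hx hPv hcP (Or.inl rfl) hX hZx hZcol.symm).trans
      (reach_attached_adj S hx hw hcP hPw (Or.inr rfl) hZx hY (hZcol.trans hXY))
  · obtain ⟨Z, hZx, hZcol⟩ := exists_colored_square (w.1, v.2) X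
    exact (reach_attached_adj S hv hx hPv hdP (Or.inr rfl) hX hZx hZcol.symm).trans
      (reach_attached_adj S hx hw hdP hPw (Or.inl rfl) hZx hY (hZcol.trans hXY))

end SCC
namespace SCC

def LinkedAdj (S : Finset (ℤ × ℤ)) (a b : ℤ × ℤ) : Prop :=
  ∃ v, interiorVertex S v ∧ v ∈ cornersF a ∧ v ∈ cornersF b

lemma reach_of_linkedPath (S : Finset (ℤ × ℤ)) (hst : Standing S) {P P' : ℤ × ℤ}
    (h : Relation.ReflTransGen (LinkedAdj S) P P') :
    ∀ X Y v w, interiorVertex S v → interiorVertex S w → v ∈ cornersF P → v ∈ cornersF X →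
      w ∈ cornersF P' → w ∈ cornersF Y → (isRed X ↔ isRed Y) → Reach S X Y := by
  induction h with
  | refl =>
    intro X Y v w hv hw hPv hXv hPw hYw hXY
    exact reach_attached S hst (mem_of_corner S hPv hv) hv hw hPv hPw hXv hYw hXY
  | @tail b c hPb hbc ih =>
    intro X Y v w hv hw hPv hXv hP'w hYw hXY
    obtain ⟨u, hu, hub, huc⟩ := hbc
    obtain ⟨Z, hZu, hZcol⟩ := exists_colored_square u X
    have h1 : Reach S X Z := ih X Z v u hv hu hPv hXv hub hZu hZcol.symm
    have h2 : Reach S Z Y := reach_attached S hst (mem_of_corner S huc hu) hu hw huc hP'w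
      hZu hYw (hZcol.trans hXY)
    exact h1.trans h2

def EAdj (S : Finset (ℤ × ℤ)) (a b : ℤ × ℤ) : Prop :=
  a ∈ S ∧ b ∈ S ∧ ((a.1 = b.1 ∧ (a.2 = b.2 + 1 ∨ b.2 = a.2 + 1)) ∨
    (a.2 = b.2 ∧ (a.1 = b.1 + 1 ∨ b.1 = a.1 + 1)))

lemma eadj_symm (S : Finset (ℤ × ℤ)) : Symmetric (EAdj S) := by
  rintro a b ⟨ha, hb, h⟩
  exact ⟨hb, ha, by tauto⟩

lemma linked_of_eadj (S : Finset (ℤ × ℤ)) (hst : Standing S) {a b : ℤ × ℤ}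
    (h : EAdj S a b) : LinkedAdj S a b := by
  obtain ⟨ha, hb, ⟨h1, h2 | h2⟩ | ⟨h1, h2 | h2⟩⟩ := h
  · -- a.2 = b.2 + 1 : a above b, use edgeH at a
    rcases hst.edgeH a ha (by rwa [show ((a.1, a.2 - 1) : ℤ × ℤ) = b from
        Prod.ext_iff.mpr ⟨by omega, by omega⟩]) with hint | hint
    · exact ⟨a, hint, corner_self a, corner_mem'' (Or.inl h1) (Or.inr h2)⟩
    · exact ⟨(a.1 + 1, a.2), hint, corner_mem'' (by simp) (by simp),
        corner_mem'' (by simp; omega) (by simp; omega)⟩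
  · -- b.2 = a.2 + 1 : b above a, use edgeH at b
    rcases hst.edgeH b hb (by rwa [show ((b.1, b.2 - 1) : ℤ × ℤ) = a from
        Prod.ext_iff.mpr ⟨by omega, by omega⟩]) with hint | hint
    · exact ⟨b, hint, corner_mem'' (Or.inl h1.symm) (Or.inr h2), corner_self b⟩
    · exact ⟨(b.1 + 1, b.2), hint, corner_mem'' (by simp; omega) (by simp; omega),
        corner_mem'' (by simp) (by simp)⟩
  · -- a.1 = b.1 + 1 : a right of b, use edgeV at a
    rcases hst.edgeV a ha (by rwa [show ((a.1 - 1, a.2) : ℤ × ℤ) = b from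
        Prod.ext_iff.mpr ⟨by omega, by omega⟩]) with hint | hint
    · exact ⟨a, hint, corner_self a, corner_mem'' (Or.inr h2) (Or.inl h1)⟩
    · exact ⟨(a.1, a.2 + 1), hint, corner_mem'' (by simp) (by simp),
        corner_mem'' (by simp; omega) (by simp; omega)⟩
  · -- b.1 = a.1 + 1 : b right of a, use edgeV at b
    rcases hst.edgeV b hb (by rwa [show ((b.1 - 1, b.2) : ℤ × ℤ) = a from
        Prod.ext_iff.mpr ⟨by omega, by omega⟩]) with hint | hint
    · exact ⟨b, hint, corner_mem'' (Or.inr h2) (Or.inl h1.symm), corner_self b⟩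
    · exact ⟨(b.1, b.2 + 1), hint, corner_mem'' (by simp; omega) (by simp; omega),
        corner_mem'' (by simp) (by simp)⟩

lemma exists_interior_corner (S : Finset (ℤ × ℤ)) (hst : Standing S) {Q : ℤ × ℤ} (hQ : Q ∈ S) :
    ∃ v, v ∈ cornersF Q ∧ interiorVertex S v := by
  by_contra hcon
  push_neg at hcon
  apply hst.noFourBoundary Q hQ
  refine ⟨⟨meshVertex_of_corner (corner_self Q) hQ, hcon Q (corner_self Q)⟩,
    ⟨meshVertex_of_corner (corner_mem'' (by simp) (by simp)) hQ,
      hcon _ (corner_mem'' (by simp) (by simp))⟩,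
    ⟨meshVertex_of_corner (corner_mem'' (by simp) (by simp)) hQ,
      hcon _ (corner_mem'' (by simp) (by simp))⟩,
    ⟨meshVertex_of_corner (corner_mem'' (by simp) (by simp)) hQ,
      hcon _ (corner_mem'' (by simp) (by simp))⟩⟩

lemma toChain {r : ℤ × ℤ → ℤ × ℤ → Prop} {a b : ℤ × ℤ} (h : Relation.ReflTransGen r a b) :
    ∃ (N : ℕ) (f : ℕ → ℤ × ℤ), f 0 = a ∧ f N = b ∧ ∀ i < N, r (f i) (f (i + 1)) := by
  induction h with
  | refl => exact ⟨0, fun _ => a, rfl, rfl, fun i hi => absurd hi (Nat.not_lt_zero i)⟩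
  | @tail b c hab hbc ih =>
    obtain ⟨N, f, h0, hN, hsteps⟩ := ih
    refine ⟨N + 1, fun i => if i ≤ N then f i else c, by simpa using h0, by simp, ?_⟩
    intro i hi
    rcases Nat.lt_or_ge i N with h | h
    · simpa [show i ≤ N by omega, show i + 1 ≤ N by omega] using hsteps i h
    · have hiN : i = N := by omega
      subst hiN
      simpa [hN] using hbc

end SCC
namespace SCC

lemma isClosed_meshRegion (T : Finset (ℤ × ℤ)) : IsClosed (meshRegion T) := by
  apply Set.Finite.isClosed_biUnion (T.finite_toSet)
  intro q _
  exact isClosed_Icc.prod isClosed_Icc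

lemma unitSq_subset {T : Finset (ℤ × ℤ)} {q : ℤ × ℤ} (hq : q ∈ T) :
    unitSq q ⊆ meshRegion T := Set.subset_biUnion_of_mem hq

lemma mem_meshRegion {T : Finset (ℤ × ℤ)} {z : ℝ × ℝ} :
    z ∈ meshRegion T ↔ ∃ q ∈ T, z ∈ unitSq q := by
  simp [meshRegion]

/-- The only grid square containing the center of `P` is `P`. -/
lemma center_unique {q P : ℤ × ℤ} (h : (((P.1 : ℝ) + 1/2, (P.2 : ℝ) + 1/2) : ℝ × ℝ) ∈ unitSq q) :
    q = P := by
  obtain ⟨⟨h1, h2⟩, h3, h4⟩ := h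
  simp only at h1 h2 h3 h4
  have l1 : q.1 < P.1 + 1 := by exact_mod_cast (show (q.1 : ℝ) < (P.1 : ℝ) + 1 by linarith)
  have l2 : P.1 < q.1 + 1 := by exact_mod_cast (show (P.1 : ℝ) < (q.1 : ℝ) + 1 by linarith)
  have l3 : q.2 < P.2 + 1 := by exact_mod_cast (show (q.2 : ℝ) < (P.2 : ℝ) + 1 by linarith)
  have l4 : P.2 < q.2 + 1 := by exact_mod_cast (show (P.2 : ℝ) < (q.2 : ℝ) + 1 by linarith)
  exact Prod.ext_iff.mpr ⟨by omega, by omega⟩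

lemma center_mem_interior (S : Finset (ℤ × ℤ)) {P : ℤ × ℤ} (hP : P ∈ S) :
    (((P.1 : ℝ) + 1/2, (P.2 : ℝ) + 1/2) : ℝ × ℝ) ∈ interior (meshRegion S) := by
  have hsub : interior (unitSq P) ⊆ interior (meshRegion S) :=
    interior_mono (unitSq_subset hP)
  apply hsub
  rw [unitSq, interior_prod_eq, interior_Icc, interior_Icc]
  constructor <;> simp <;> norm_num

/-- A point with both coordinates strictly between consecutive integers lies in a unique
grid square. -/
lemma sq_unique {x y : ℝ} {q : ℤ × ℤ} {m n : ℤ} (hx : (m : ℝ) < x) (hx' : x < m + 1)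
    (hy : (n : ℝ) < y) (hy' : y < n + 1) (h : ((x, y) : ℝ × ℝ) ∈ unitSq q) : q = (m, n) := by
  obtain ⟨⟨h1, h2⟩, h3, h4⟩ := h
  simp only at h1 h2 h3 h4
  have l1 : q.1 < m + 1 := by exact_mod_cast (show (q.1 : ℝ) < (m : ℝ) + 1 by linarith)
  have l2 : m < q.1 + 1 := by exact_mod_cast (show (m : ℝ) < (q.1 : ℝ) + 1 by linarith)
  have l3 : q.2 < n + 1 := by exact_mod_cast (show (q.2 : ℝ) < (n : ℝ) + 1 by linarith)
  have l4 : n < q.2 + 1 := by exact_mod_cast (show (n : ℝ) < (q.2 : ℝ) + 1 by linarith)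
  exact Prod.ext_iff.mpr ⟨by omega, by omega⟩

/-- If an integer point is in the interior of the mesh region, all four squares around it
belong to `S`. -/
lemma quadrant_mem (S : Finset (ℤ × ℤ)) {m c : ℤ × ℤ}
    (hz : (((m.1 : ℝ), (m.2 : ℝ)) : ℝ × ℝ) ∈ interior (meshRegion S))
    (hc1 : c.1 = m.1 - 1 ∨ c.1 = m.1) (hc2 : c.2 = m.2 - 1 ∨ c.2 = m.2) : c ∈ S := by
  obtain ⟨ε, hε, hball⟩ := Metric.isOpen_iff.mp isOpen_interior _ hz
  set δ : ℝ := min (ε / 2) (1 / 2) with hδdef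
  have hδ0 : 0 < δ := lt_min (by linarith) (by norm_num)
  have hδ1 : δ < 1 := lt_of_le_of_lt (min_le_right _ _) (by norm_num)
  have hδε : δ < ε := lt_of_le_of_lt (min_le_left _ _) (by linarith)
  set px : ℝ := if c.1 = m.1 then (m.1 : ℝ) + δ else (m.1 : ℝ) - δ with hpx
  set py : ℝ := if c.2 = m.2 then (m.2 : ℝ) + δ else (m.2 : ℝ) - δ with hpy
  have key : ∀ a b : ℝ, (b = a + δ ∨ b = a - δ) → |b - a| < ε := by
    rintro a b (rfl | rfl)
    · rw [add_sub_cancel_left, abs_of_pos hδ0]; exact hδε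
    · rw [sub_sub_cancel_left, abs_neg, abs_of_pos hδ0]; exact hδε
  have hd1 : px = (m.1 : ℝ) + δ ∨ px = (m.1 : ℝ) - δ := by rw [hpx]; split_ifs <;> simp
  have hd2 : py = (m.2 : ℝ) + δ ∨ py = (m.2 : ℝ) - δ := by rw [hpy]; split_ifs <;> simp
  have hpball : ((px, py) : ℝ × ℝ) ∈ Metric.ball (((m.1 : ℝ), (m.2 : ℝ)) : ℝ × ℝ) ε := by
    rw [Metric.mem_ball, Prod.dist_eq]
    apply max_lt
    · rw [Real.dist_eq]; exact key _ _ hd1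
    · rw [Real.dist_eq]; exact key _ _ hd2
  have hpmem : ((px, py) : ℝ × ℝ) ∈ meshRegion S := interior_subset (hball hpball)
  obtain ⟨q, hqS, hq⟩ := mem_meshRegion.mp hpmem
  -- the point lies strictly inside the square `c`
  have hx1 : (c.1 : ℝ) < px := by
    rw [hpx]; split_ifs with h
    · rw [h]; linarith
    · have : c.1 = m.1 - 1 := by tauto
      rw [this]; push_cast; linarith
  have hx2 : px < (c.1 : ℝ) + 1 := by
    rw [hpx]; split_ifs with h
    · rw [h]; linarith
    · have : c.1 = m.1 - 1 := by tauto
      rw [this]; push_cast; linarith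
  have hy1 : (c.2 : ℝ) < py := by
    rw [hpy]; split_ifs with h
    · rw [h]; linarith
    · have : c.2 = m.2 - 1 := by tauto
      rw [this]; push_cast; linarith
  have hy2 : py < (c.2 : ℝ) + 1 := by
    rw [hpy]; split_ifs with h
    · rw [h]; linarith
    · have : c.2 = m.2 - 1 := by tauto
      rw [this]; push_cast; linarith
  have : q = (c.1, c.2) := sq_unique hx1 hx2 hy1 hy2 hq
  rwa [this, Prod.mk.eta] at hqS

end SCC
namespace SCC

lemma eadj_around (S : Finset (ℤ × ℤ)) {m : ℤ × ℤ} (hm : interiorVertex S m) {a b : ℤ × ℤ}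
    (ha1 : a.1 = m.1 - 1 ∨ a.1 = m.1) (ha2 : a.2 = m.2 - 1 ∨ a.2 = m.2)
    (hb1 : b.1 = m.1 - 1 ∨ b.1 = m.1) (hb2 : b.2 = m.2 - 1 ∨ b.2 = m.2) :
    Relation.ReflTransGen (EAdj S) a b := by
  obtain ⟨h00, h01, h10, h11⟩ := hm
  have h11' : ((m.1, m.2) : ℤ × ℤ) ∈ S := by rwa [Prod.mk.eta]
  have e1 : EAdj S (m.1 - 1, m.2 - 1) (m.1 - 1, m.2) := ⟨h00, h01, by simp⟩
  have e2 : EAdj S (m.1 - 1, m.2 - 1) (m.1, m.2 - 1) := ⟨h00, h10, by simp⟩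
  have e3 : EAdj S (m.1 - 1, m.2) (m.1, m.2) := ⟨h01, h11', by simp⟩
  have L : ∀ x : ℤ × ℤ, (x.1 = m.1 - 1 ∨ x.1 = m.1) → (x.2 = m.2 - 1 ∨ x.2 = m.2) →
      Relation.ReflTransGen (EAdj S) (m.1 - 1, m.2 - 1) x := by
    intro x hx1 hx2
    rcases hx1 with hx1 | hx1 <;> rcases hx2 with hx2 | hx2
    · rw [show x = (m.1 - 1, m.2 - 1) from Prod.ext_iff.mpr ⟨hx1, hx2⟩]
    · rw [show x = (m.1 - 1, m.2) from Prod.ext_iff.mpr ⟨hx1, hx2⟩]; exact .single e1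
    · rw [show x = (m.1, m.2 - 1) from Prod.ext_iff.mpr ⟨hx1, hx2⟩]; exact .single e2
    · rw [show x = (m.1, m.2) from Prod.ext_iff.mpr ⟨hx1, hx2⟩]
      exact (Relation.ReflTransGen.single e1).tail e3
  haveI : Std.Symm (EAdj S) := ⟨fun _ _ h => eadj_symm S h⟩
  exact ((Relation.ReflTransGen.symmetric (r := EAdj S)).symm _ _ (L a ha1 ha2)).trans (L b hb1 hb2)

lemma eadj_connected (S : Finset (ℤ × ℤ)) (hst : Standing S) {P P' : ℤ × ℤ}
    (hP : P ∈ S) (hP' : P' ∈ S) : Relation.ReflTransGen (EAdj S) P P' := by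
  by_contra hcon
  classical
  set S1 := S.filter (fun q => Relation.ReflTransGen (EAdj S) P q) with hS1def
  set S2 := S.filter (fun q => ¬ Relation.ReflTransGen (EAdj S) P q) with hS2def
  have hkey : ∀ z ∈ interior (meshRegion S), z ∈ meshRegion S1 → z ∈ meshRegion S2 → False := by
    intro z hz hz1 hz2
    obtain ⟨a, ha, hza⟩ := mem_meshRegion.mp hz1
    obtain ⟨b, hb, hzb⟩ := mem_meshRegion.mp hz2
    obtain ⟨haS, haR⟩ := Finset.mem_filter.mp ha
    obtain ⟨hbS, hbR⟩ := Finset.mem_filter.mp hb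
    obtain ⟨⟨za1, za2⟩, za3, za4⟩ := hza
    obtain ⟨⟨zb1, zb2⟩, zb3, zb4⟩ := hzb
    have c1 : a.1 ≤ b.1 + 1 := by
      exact_mod_cast (show (a.1 : ℝ) ≤ (b.1 : ℝ) + 1 by linarith)
    have c2 : b.1 ≤ a.1 + 1 := by
      exact_mod_cast (show (b.1 : ℝ) ≤ (a.1 : ℝ) + 1 by linarith)
    have c3 : a.2 ≤ b.2 + 1 := by
      exact_mod_cast (show (a.2 : ℝ) ≤ (b.2 : ℝ) + 1 by linarith)
    have c4 : b.2 ≤ a.2 + 1 := by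
      exact_mod_cast (show (b.2 : ℝ) ≤ (a.2 : ℝ) + 1 by linarith)
    rcases (show a.1 = b.1 ∨ a.1 = b.1 + 1 ∨ b.1 = a.1 + 1 by omega) with d1 | d1 | d1 <;>
      rcases (show a.2 = b.2 ∨ a.2 = b.2 + 1 ∨ b.2 = a.2 + 1 by omega) with d2 | d2 | d2
    -- (=,=)
    · exact hbR (by rw [← (Prod.ext_iff.mpr ⟨d1, d2⟩ : a = b)]; exact haR)
    · exact hbR (haR.tail ⟨haS, hbS, Or.inl ⟨d1, Or.inl d2⟩⟩)
    · exact hbR (haR.tail ⟨haS, hbS, Or.inl ⟨d1, Or.inr d2⟩⟩)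
    · exact hbR (haR.tail ⟨haS, hbS, Or.inr ⟨d2, Or.inl d1⟩⟩)
    · have r1 : (b.1 : ℝ) + 1 = (a.1 : ℝ) := by exact_mod_cast d1.symm
      have r2 : (b.2 : ℝ) + 1 = (a.2 : ℝ) := by exact_mod_cast d2.symm
      have e1 : z.1 = (a.1 : ℝ) := le_antisymm (by linarith) za1
      have e2 : z.2 = (a.2 : ℝ) := le_antisymm (by linarith) za3
      rw [show z = (((a.1 : ℝ), (a.2 : ℝ)) : ℝ × ℝ) from Prod.ext_iff.mpr ⟨e1, e2⟩] at hz
      have hiv : interiorVertex S a :=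
        ⟨quadrant_mem S (m := a) hz (by simp) (by simp),
         quadrant_mem S (m := a) hz (by simp) (by simp),
         quadrant_mem S (m := a) hz (by simp) (by simp),
         quadrant_mem S (m := a) hz (by simp) (by simp)⟩
      exact hbR (haR.trans (eadj_around S hiv (by first | omega | simp <;> omega)
        (by first | omega | simp <;> omega) (by first | omega | simp <;> omega)
        (by first | omega | simp <;> omega)))
    · have r1 : (b.1 : ℝ) + 1 = (a.1 : ℝ) := by exact_mod_cast d1.symm
      have r2 : (a.2 : ℝ) + 1 = (b.2 : ℝ) := by exact_mod_cast d2.symm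
      have e1 : z.1 = (a.1 : ℝ) := le_antisymm (by linarith) za1
      have e2 : z.2 = (b.2 : ℝ) := le_antisymm (by linarith) zb3
      rw [show z = (((a.1 : ℝ), (b.2 : ℝ)) : ℝ × ℝ) from Prod.ext_iff.mpr ⟨e1, e2⟩] at hz
      have hiv : interiorVertex S (a.1, b.2) :=
        ⟨quadrant_mem S (m := (a.1, b.2)) hz (by simp) (by simp),
         quadrant_mem S (m := (a.1, b.2)) hz (by simp) (by simp),
         quadrant_mem S (m := (a.1, b.2)) hz (by simp) (by simp),
         quadrant_mem S (m := (a.1, b.2)) hz (by simp) (by simp)⟩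
      exact hbR (haR.trans (eadj_around S hiv (by first | omega | simp <;> omega)
        (by first | omega | simp <;> omega) (by first | omega | simp <;> omega)
        (by first | omega | simp <;> omega)))
    · exact hbR (haR.tail ⟨haS, hbS, Or.inr ⟨d2, Or.inr d1⟩⟩)
    · have r1 : (a.1 : ℝ) + 1 = (b.1 : ℝ) := by exact_mod_cast d1.symm
      have r2 : (b.2 : ℝ) + 1 = (a.2 : ℝ) := by exact_mod_cast d2.symm
      have e1 : z.1 = (b.1 : ℝ) := le_antisymm (by linarith) zb1
      have e2 : z.2 = (a.2 : ℝ) := le_antisymm (by linarith) za3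
      rw [show z = (((b.1 : ℝ), (a.2 : ℝ)) : ℝ × ℝ) from Prod.ext_iff.mpr ⟨e1, e2⟩] at hz
      have hiv : interiorVertex S (b.1, a.2) :=
        ⟨quadrant_mem S (m := (b.1, a.2)) hz (by simp) (by simp),
         quadrant_mem S (m := (b.1, a.2)) hz (by simp) (by simp),
         quadrant_mem S (m := (b.1, a.2)) hz (by simp) (by simp),
         quadrant_mem S (m := (b.1, a.2)) hz (by simp) (by simp)⟩
      exact hbR (haR.trans (eadj_around S hiv (by first | omega | simp <;> omega)
        (by first | omega | simp <;> omega) (by first | omega | simp <;> omega)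
        (by first | omega | simp <;> omega)))
    · have r1 : (a.1 : ℝ) + 1 = (b.1 : ℝ) := by exact_mod_cast d1.symm
      have r2 : (a.2 : ℝ) + 1 = (b.2 : ℝ) := by exact_mod_cast d2.symm
      have e1 : z.1 = (b.1 : ℝ) := le_antisymm (by linarith) zb1
      have e2 : z.2 = (b.2 : ℝ) := le_antisymm (by linarith) zb3
      rw [show z = (((b.1 : ℝ), (b.2 : ℝ)) : ℝ × ℝ) from Prod.ext_iff.mpr ⟨e1, e2⟩] at hz
      have hiv : interiorVertex S b :=
        ⟨quadrant_mem S (m := b) hz (by simp) (by simp),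
         quadrant_mem S (m := b) hz (by simp) (by simp),
         quadrant_mem S (m := b) hz (by simp) (by simp),
         quadrant_mem S (m := b) hz (by simp) (by simp)⟩
      exact hbR (haR.trans (eadj_around S hiv (by first | omega | simp <;> omega)
        (by first | omega | simp <;> omega) (by first | omega | simp <;> omega)
        (by first | omega | simp <;> omega)))
  -- separation argument
  have hopen1 : IsOpen (meshRegion S2)ᶜ := (isClosed_meshRegion S2).isOpen_compl
  have hopen2 : IsOpen (meshRegion S1)ᶜ := (isClosed_meshRegion S1).isOpen_compl
  have hsub : interior (meshRegion S) ⊆ (meshRegion S2)ᶜ ∪ (meshRegion S1)ᶜ := by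
    intro z hz
    by_contra hzc
    simp only [Set.mem_union, Set.mem_compl_iff, not_or, not_not] at hzc
    rcases hzc with ⟨h2, h1⟩
    exact hkey z hz h1 h2
  have hne1 : (interior (meshRegion S) ∩ (meshRegion S2)ᶜ).Nonempty := by
    refine ⟨(((P.1 : ℝ) + 1/2, (P.2 : ℝ) + 1/2) : ℝ × ℝ), center_mem_interior S hP, ?_⟩
    intro hc
    obtain ⟨q, hq, hzq⟩ := mem_meshRegion.mp hc
    rw [center_unique hzq] at hq
    exact (Finset.mem_filter.mp hq).2 Relation.ReflTransGen.refl
  have hne2 : (interior (meshRegion S) ∩ (meshRegion S1)ᶜ).Nonempty := by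
    refine ⟨(((P'.1 : ℝ) + 1/2, (P'.2 : ℝ) + 1/2) : ℝ × ℝ), center_mem_interior S hP', ?_⟩
    intro hc
    obtain ⟨q, hq, hzq⟩ := mem_meshRegion.mp hc
    rw [center_unique hzq] at hq
    exact hcon (Finset.mem_filter.mp hq).2
  obtain ⟨z, hz, hz2c, hz1c⟩ :=
    hst.connected.isPreconnected _ _ hopen1 hopen2 hsub hne1 hne2
  obtain ⟨q, hq, hzq⟩ := mem_meshRegion.mp (interior_subset hz)
  by_cases hq1 : Relation.ReflTransGen (EAdj S) P q
  · exact hz1c (mem_meshRegion.mpr ⟨q, Finset.mem_filter.mpr ⟨hq, hq1⟩, hzq⟩)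
  · exact hz2c (mem_meshRegion.mpr ⟨q, Finset.mem_filter.mpr ⟨hq, hq1⟩, hzq⟩)

end SCC

open SCC

/-- Under the standing assumptions, for any two squares `Q, Q'` of `S` of the
same color there exists a finite sequence of squares `Q = Q₁, Q₂, …, Q_N = Q'` of `S` of that
color such that consecutive squares are distinct and share a common corner which is an
interior vertex. -/
theorem same_color_chain (S : Finset (ℤ × ℤ)) (h : Standing S) :
    ∀ Q ∈ S, ∀ Q' ∈ S, (isRed Q ↔ isRed Q') →
      ∃ (N : ℕ) (f : ℕ → ℤ × ℤ), f 0 = Q ∧ f N = Q' ∧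
        (∀ i ≤ N, f i ∈ S ∧ (isRed (f i) ↔ isRed Q)) ∧
        ∀ i < N, f i ≠ f (i + 1) ∧
          ∃ v : ℤ × ℤ, v ∈ cornersF (f i) ∧ v ∈ cornersF (f (i + 1)) ∧
            interiorVertex S v := by
  intro Q hQ Q' hQ' hcol
  obtain ⟨v, hvQ, hv⟩ := exists_interior_corner S h hQ
  obtain ⟨w, hwQ', hw⟩ := exists_interior_corner S h hQ'
  have hlpath : Relation.ReflTransGen (LinkedAdj S) Q Q' :=
    Relation.ReflTransGen.mono (fun a b hab => linked_of_eadj S h hab) _ _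
      (eadj_connected S h hQ hQ')
  have hreach : Reach S Q Q' :=
    reach_of_linkedPath S h hlpath Q Q' v w hv hw hvQ hvQ hwQ' hwQ' hcol
  obtain ⟨N, f, h0, hN, hsteps⟩ := toChain hreach
  have hcoli : ∀ i, i ≤ N → (isRed (f i) ↔ isRed Q) := by
    intro i
    induction i with
    | zero => intro _; rw [h0]
    | succ n ihn =>
      intro hn
      have hn' : n < N := by omega
      exact ((hsteps n hn').2.1).symm.trans (ihn (by omega))
  refine ⟨N, f, h0, hN, ?_, ?_⟩
  · intro i hi
    refine ⟨?_, hcoli i hi⟩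
    rcases Nat.lt_or_ge i N with hlt | hge
    · obtain ⟨-, -, v', hv'1, -, hv'int⟩ := hsteps i hlt
      exact mem_of_corner S hv'1 hv'int
    · have : i = N := by omega
      rw [this, hN]; exact hQ'
  · intro i hi
    obtain ⟨hne, -, hvv⟩ := hsteps i hi
    exact ⟨hne, hvv⟩
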